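/- Let g_β(θ) = E_u[g(θ + βu)] be the Gaussian smoothing of g, where u is a standard Gaussian in R^d. If g has L-Lipschitz gradient, then for every θ, ||∇g(θ)||^2 ≤ 2·||∇g_β(θ)||^2 + (β^2 L^2 (d+4)^2)/2. -/

import Mathlib

open MeasureTheory ProbabilityTheory RealInnerProductSpace

open Real


lemma integral_Ioi_sq_exp : ∫ x in Set.Ioi (0:ℝ), x ^ 2 * rexp (-(1/2) * x ^ 2)
    = Real.sqrt 2 * Real.sqrt π / 2 := by
  have h := integral_rpow_mul_exp_neg_mul_rpow (p := 2) (q := 2) (b := 1/2)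
    (by norm_num) (by norm_num) (by norm_num)
  rw [show ∫ x in Set.Ioi (0:ℝ), x ^ 2 * rexp (-(1/2) * x ^ 2)
      = ∫ x in Set.Ioi (0:ℝ), x ^ (2:ℝ) * rexp (-(1/2) * x ^ (2:ℝ)) by
    refine setIntegral_congr_fun measurableSet_Ioi (fun x _ => ?_)
    rw [show ((2:ℝ)) = ((2:ℕ):ℝ) by norm_num, Real.rpow_natCast]
    , h]
  rw [show (-(2+1)/2 : ℝ) = -(3/2 : ℝ) by norm_num,
    show ((2+1)/2 : ℝ) = 1/2 + 1 by norm_num,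
    Real.Gamma_add_one (by norm_num), Real.Gamma_one_half_eq]
  rw [show ((1:ℝ)/2) = 2⁻¹ by norm_num, Real.inv_rpow (by norm_num), Real.rpow_neg (by positivity),
    inv_inv, show ((3:ℝ)/2) = 1 + 1/2 by norm_num, Real.rpow_add (by norm_num),
    Real.rpow_one, ← Real.sqrt_eq_rpow]
  ring

lemma integral_sq_exp_line : ∫ x : ℝ, x ^ 2 * rexp (-(1/2) * x ^ 2) = Real.sqrt (2 * π) := by
  have : ∫ x : ℝ, x ^ 2 * rexp (-(1/2) * x ^ 2)
      = ∫ x : ℝ, |x| ^ 2 * rexp (-(1/2) * |x| ^ 2) := by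
    congr 1; ext x; rw [sq_abs]
  rw [this, integral_comp_abs (f := fun x => x ^ 2 * rexp (-(1/2) * x ^ 2)),
    integral_Ioi_sq_exp, Real.sqrt_mul (by norm_num)]
  ring

lemma integrable_sq_exp_line : Integrable (fun x : ℝ => x ^ 2 * rexp (-(1/2) * x ^ 2)) := by
  have h := integrable_rpow_mul_exp_neg_mul_sq (b := 1/2) (by norm_num) (s := 2) (by norm_num)
  have : (fun x : ℝ => x ^ (2:ℝ) * rexp (-(1/2) * x ^ 2)) = fun x : ℝ => x ^ 2 * rexp (-(1/2) * x ^ 2) := by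
    ext x; rw [show ((2:ℝ)) = ((2:ℕ):ℝ) by norm_num, Real.rpow_natCast]
  rwa [this] at h

lemma gaussianPDFReal_01 (x : ℝ) :
    gaussianPDFReal 0 1 x = (Real.sqrt (2 * π))⁻¹ * rexp (-(1/2) * x ^ 2) := by
  rw [gaussianPDFReal_def]
  simp only [NNReal.coe_one, mul_one, sub_zero]
  ring_nf

lemma integrable_sq_gaussian : Integrable (fun x : ℝ => x ^ 2) (gaussianReal 0 1) := by
  rw [gaussianReal_of_var_ne_zero 0 one_ne_zero,
    integrable_withDensity_iff (measurable_gaussianPDF 0 1)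
      (Filter.Eventually.of_forall fun x => ENNReal.ofReal_lt_top)]
  have : (fun x : ℝ => x ^ 2 * (gaussianPDF 0 1 x).toReal)
      = fun x : ℝ => (Real.sqrt (2 * π))⁻¹ * (x ^ 2 * rexp (-(1/2) * x ^ 2)) := by
    ext x
    rw [gaussianPDF, ENNReal.toReal_ofReal (gaussianPDFReal_nonneg 0 1 x), gaussianPDFReal_01]
    ring
  rw [this]
  exact integrable_sq_exp_line.const_mul _

lemma gaussianPDF_eq_coe_nnreal (x : ℝ) :
    gaussianPDF 0 1 x = ((gaussianPDFReal 0 1 x).toNNReal : ENNReal) := rfl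

lemma integral_sq_gaussian : ∫ x, x ^ 2 ∂(gaussianReal 0 1) = 1 := by
  rw [gaussianReal_of_var_ne_zero 0 one_ne_zero]
  have : (ℙ : Measure ℝ).withDensity (gaussianPDF 0 1)
      = (ℙ : Measure ℝ).withDensity (fun x => ((gaussianPDFReal 0 1 x).toNNReal : ENNReal)) := rfl
  rw [this, integral_withDensity_eq_integral_smul₀ ((measurable_gaussianPDFReal 0 1).real_toNNReal.aemeasurable) _]
  have : (fun x : ℝ => (gaussianPDFReal 0 1 x).toNNReal • (x ^ 2))
      = fun x : ℝ => (Real.sqrt (2 * π))⁻¹ * (x ^ 2 * rexp (-(1/2) * x ^ 2)) := by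
    ext x
    rw [NNReal.smul_def, smul_eq_mul, Real.coe_toNNReal _ (gaussianPDFReal_nonneg 0 1 x),
      gaussianPDFReal_01]
    ring
  rw [this, integral_const_mul, integral_sq_exp_line,
    inv_mul_cancel₀ (by positivity)]

/-- The standard Gaussian measure on `EuclideanSpace ℝ (Fin d)`. -/
noncomputable def stdGaussian (d : ℕ) : Measure (EuclideanSpace ℝ (Fin d)) :=
  (Measure.pi fun _ : Fin d => gaussianReal 0 1).map
    (EuclideanSpace.equiv (Fin d) ℝ).symm

section Std
variable {d : ℕ}

local notation "π_d" => (Measure.pi fun _ : Fin d => gaussianReal 0 1)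

lemma stdGaussian_eq_map :
    stdGaussian d = Measure.map (MeasurableEquiv.toLp 2 (Fin d → ℝ)) π_d := rfl

instance : IsProbabilityMeasure (stdGaussian d) := by
  rw [stdGaussian_eq_map]
  exact Measure.isProbabilityMeasure_map
    (MeasurableEquiv.toLp 2 (Fin d → ℝ)).measurable.aemeasurable

lemma integral_stdGaussian {F : Type*} [NormedAddCommGroup F] [NormedSpace ℝ F]
    (f : EuclideanSpace ℝ (Fin d) → F) :
    ∫ u, f u ∂(stdGaussian d) = ∫ x, f ((MeasurableEquiv.toLp 2 (Fin d → ℝ)) x) ∂π_d := by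
  rw [stdGaussian_eq_map, integral_map_equiv]

lemma integrable_stdGaussian_iff {F : Type*} [NormedAddCommGroup F]
    (f : EuclideanSpace ℝ (Fin d) → F) :
    Integrable f (stdGaussian d) ↔
      Integrable (fun x => f ((MeasurableEquiv.toLp 2 (Fin d → ℝ)) x)) π_d := by
  rw [stdGaussian_eq_map]
  exact integrable_map_equiv _ _

lemma map_eval_pi (i : Fin d) :
    Measure.map (fun x : Fin d → ℝ => x i) π_d = gaussianReal 0 1 := by
  ext s hs
  rw [Measure.map_apply (measurable_pi_apply i) hs]
  have : (fun x : Fin d → ℝ => x i) ⁻¹' s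
      = Set.univ.pi (Function.update (fun _ => Set.univ) i s) := Set.eval_preimage
  rw [this, Measure.pi_pi]
  rw [Finset.prod_eq_single i (fun j _ hj => by simp [Function.update_of_ne hj])
    (by simp)]
  simp

lemma integrable_eval_sq (i : Fin d) : Integrable (fun x : Fin d → ℝ => (x i) ^ 2) π_d := by
  have h : Integrable (fun t : ℝ => t ^ 2) (Measure.map (fun x : Fin d → ℝ => x i) π_d) := by
    rw [map_eval_pi]; exact integrable_sq_gaussian
  exact (integrable_map_measure ((measurable_id.pow_const 2).aestronglyMeasurable)
    (measurable_pi_apply i).aemeasurable).mp h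

lemma integral_eval_sq (i : Fin d) : ∫ x, (x i) ^ 2 ∂π_d = 1 := by
  have h : ∫ t, t ^ 2 ∂(Measure.map (fun x : Fin d → ℝ => x i) π_d) = 1 := by
    rw [map_eval_pi]; exact integral_sq_gaussian
  rwa [integral_map (measurable_pi_apply i).aemeasurable (by fun_prop)] at h

lemma integrable_normSq_stdGaussian :
    Integrable (fun u : EuclideanSpace ℝ (Fin d) => ‖u‖ ^ 2) (stdGaussian d) := by
  rw [integrable_stdGaussian_iff]
  have : (fun x : Fin d → ℝ => ‖(MeasurableEquiv.toLp 2 (Fin d → ℝ)) x‖ ^ 2)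
      = fun x : Fin d → ℝ => ∑ i, (x i) ^ 2 := by
    ext x
    rw [EuclideanSpace.norm_eq, Real.sq_sqrt (by positivity)]
    simp only [Real.norm_eq_abs, sq_abs]
    rfl
  rw [this]
  exact integrable_finset_sum _ fun i _ => integrable_eval_sq i

lemma integral_normSq_stdGaussian :
    ∫ u, ‖u‖ ^ 2 ∂(stdGaussian d) = d := by
  rw [integral_stdGaussian]
  have : (fun x : Fin d → ℝ => ‖(MeasurableEquiv.toLp 2 (Fin d → ℝ)) x‖ ^ 2)
      = fun x : Fin d → ℝ => ∑ i, (x i) ^ 2 := by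
    ext x
    rw [EuclideanSpace.norm_eq, Real.sq_sqrt (by positivity)]
    simp only [Real.norm_eq_abs, sq_abs]
    rfl
  rw [this, integral_finset_sum _ fun i _ => integrable_eval_sq i]
  simp [integral_eval_sq]

lemma integrable_norm_stdGaussian :
    Integrable (fun u : EuclideanSpace ℝ (Fin d) => ‖u‖) (stdGaussian d) := by
  refine Integrable.mono' (g := fun u => ‖u‖ ^ 2 + 1)
    (integrable_normSq_stdGaussian.add (integrable_const 1))
    (by fun_prop) (Filter.Eventually.of_forall fun u => ?_)
  rw [Real.norm_eq_abs, abs_of_nonneg (norm_nonneg u)]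
  nlinarith [norm_nonneg u, sq_nonneg (‖u‖ - 1)]

lemma integral_norm_stdGaussian_le :
    ∫ u, ‖u‖ ∂(stdGaussian d) ≤ ((d : ℝ) + 1) / 2 := by
  have h : ∫ u, ‖u‖ ∂(stdGaussian d) ≤ ∫ u, (‖u‖ ^ 2 + 1) / 2 ∂(stdGaussian d) := by
    refine integral_mono integrable_norm_stdGaussian
      (((integrable_normSq_stdGaussian.add (integrable_const 1)).div_const 2)) fun u => ?_
    nlinarith [sq_nonneg (‖u‖ - 1)]
  calc ∫ u, ‖u‖ ∂(stdGaussian d) ≤ _ := h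
    _ = ((d : ℝ) + 1) / 2 := by
        rw [integral_div, integral_add integrable_normSq_stdGaussian (integrable_const 1),
          integral_normSq_stdGaussian, integral_const]
        simp

end Std

/-- Gaussian smoothing `g_β(θ) = E_u[g(θ + βu)]`. -/
noncomputable def gaussSmooth {d : ℕ} (g : EuclideanSpace ℝ (Fin d) → ℝ) (β : ℝ)
    (θ : EuclideanSpace ℝ (Fin d)) : ℝ :=
  ∫ u, g (θ + β • u) ∂(stdGaussian d)

section Main

variable {d : ℕ} {g : EuclideanSpace ℝ (Fin d) → ℝ}
  {g' : EuclideanSpace ℝ (Fin d) → EuclideanSpace ℝ (Fin d)} {L β : ℝ}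

local notation "E" => EuclideanSpace ℝ (Fin d)
local notation "D" => InnerProductSpace.toDual ℝ (EuclideanSpace ℝ (Fin d))

lemma g'_cont (hL : 0 ≤ L) (hlip : ∀ x y, ‖g' x - g' y‖ ≤ L * ‖x - y‖) : Continuous g' := by
  refine (LipschitzWith.of_dist_le_mul (K := L.toNNReal) fun x y => ?_).continuous
  rw [dist_eq_norm, dist_eq_norm, Real.coe_toNNReal _ hL]
  exact hlip x y

lemma g_cont (hg : ∀ x, HasGradientAt g (g' x) x) : Continuous g :=
  continuous_iff_continuousAt.2 fun x => (hg x).hasFDerivAt.differentiableAt.continuousAt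

lemma g'_norm_le (hlip : ∀ x y, ‖g' x - g' y‖ ≤ L * ‖x - y‖) (θ x : E) :
    ‖g' x‖ ≤ ‖g' θ‖ + L * ‖x - θ‖ := by
  have := hlip x θ
  have h2 := norm_sub_norm_le (g' x) (g' θ)
  linarith

lemma g_growth (hL : 0 ≤ L) (hg : ∀ x, HasGradientAt g (g' x) x)
    (hlip : ∀ x y, ‖g' x - g' y‖ ≤ L * ‖x - y‖) (θ x : E) :
    ‖g x - g θ‖ ≤ (‖g' θ‖ + L * ‖x - θ‖) * ‖x - θ‖ := by
  refine Convex.norm_image_sub_le_of_norm_hasFDerivWithin_le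
    (f' := fun y => D (g' y)) (s := Metric.closedBall θ ‖x - θ‖)
    (fun y _ => (hg y).hasFDerivAt.hasFDerivWithinAt) (fun y hy => ?_)
    (convex_closedBall _ _) (Metric.mem_closedBall_self (by positivity))
    (by simp [Metric.mem_closedBall, dist_eq_norm])
  rw [LinearIsometryEquiv.norm_map]
  have h1 := g'_norm_le hlip θ y
  have h2 : ‖y - θ‖ ≤ ‖x - θ‖ := by
    have := hy; rw [Metric.mem_closedBall, dist_eq_norm] at this; exact this
  nlinarith

lemma hasGradient_gaussSmooth (hL : 0 ≤ L) (hβ : 0 < β)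
    (hg : ∀ x, HasGradientAt g (g' x) x)
    (hlip : ∀ x y, ‖g' x - g' y‖ ≤ L * ‖x - y‖) (θ : E) :
    HasGradientAt (gaussSmooth g β) (∫ u, g' (θ + β • u) ∂(stdGaussian d)) θ := by
  have hgc := g_cont hg
  have hg'c := g'_cont hL hlip
  have key := hasFDerivAt_integral_of_dominated_of_fderiv_le (𝕜 := ℝ)
    (μ := stdGaussian d)
    (F := fun x (u : E) => g (x + β • u))
    (F' := fun x (u : E) => D (g' (x + β • u))) (x₀ := θ)
    (bound := fun u => ‖g' θ‖ + L * (1 + β * ‖u‖)) (Metric.ball_mem_nhds θ one_pos)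
    (Filter.Eventually.of_forall fun x =>
      (hgc.comp (by fun_prop : Continuous fun u : E => x + β • u)).aestronglyMeasurable)
    ?_ ?_ ?_ ?_ ?_
  · have heq : ∫ (u : E), D (g' (θ + β • u)) ∂(stdGaussian d)
        = D (∫ u, g' (θ + β • u) ∂(stdGaussian d)) :=
      (InnerProductSpace.toDual ℝ (EuclideanSpace ℝ (Fin d))).toLinearIsometry.integral_comp_comm _
    rw [heq] at key
    have := key.hasGradientAt
    rw [LinearIsometryEquiv.symm_apply_apply] at this
    exact this
  · -- Integrable (fun u => g (θ + β • u))
    refine Integrable.mono' (g := fun u : E => ‖g θ‖ + (‖g' θ‖ * β) * ‖u‖ + (L * β ^ 2) * ‖u‖ ^ 2)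
      ?_ ((hgc.comp (by fun_prop : Continuous fun u : E => θ + β • u)).aestronglyMeasurable)
      (Filter.Eventually.of_forall fun u => ?_)
    · exact ((integrable_const _).add (integrable_norm_stdGaussian.const_mul _)).add
        (integrable_normSq_stdGaussian.const_mul _)
    · have h := g_growth hL hg hlip θ (θ + β • u)
      have hn : ‖θ + β • u - θ‖ = β * ‖u‖ := by
        rw [add_sub_cancel_left, norm_smul, Real.norm_eq_abs, abs_of_pos hβ]
      rw [hn] at h
      have h2 : ‖g (θ + β • u)‖ ≤ ‖g θ‖ + ‖g (θ + β • u) - g θ‖ := by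
        simpa using norm_add_le (g θ) (g (θ + β • u) - g θ)
      nlinarith [norm_nonneg u]
  · -- AEStronglyMeasurable F' x₀
    exact ((InnerProductSpace.toDual ℝ (EuclideanSpace ℝ (Fin d))).continuous.comp
      (hg'c.comp (by fun_prop : Continuous fun u : E => θ + β • u))).aestronglyMeasurable
  · -- bound
    refine Filter.Eventually.of_forall fun u => fun x hx => ?_
    rw [LinearIsometryEquiv.norm_map]
    have h1 := g'_norm_le hlip θ (x + β • u)
    have h2 : ‖x + β • u - θ‖ ≤ ‖x - θ‖ + β * ‖u‖ := by
      have : x + β • u - θ = (x - θ) + β • u := by abel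
      rw [this]
      refine (norm_add_le _ _).trans ?_
      rw [norm_smul, Real.norm_eq_abs, abs_of_pos hβ]
    have h3 : ‖x - θ‖ < 1 := by rwa [Metric.mem_ball, dist_eq_norm] at hx
    nlinarith [mul_le_mul_of_nonneg_left h2 hL, mul_le_mul_of_nonneg_left h3.le hL,
      mul_nonneg hβ.le (norm_nonneg u)]
  · -- bound integrable
    exact (integrable_const _).add
      (((integrable_const 1).add (integrable_norm_stdGaussian.const_mul β)).const_mul L)
  · -- differentiability
    refine Filter.Eventually.of_forall fun u => fun x _ => ?_
    have h1 : HasFDerivAt (fun x : E => x + β • u) (ContinuousLinearMap.id ℝ _) x :=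
      (hasFDerivAt_id x).add_const (β • u)
    have := ((hg (x + β • u)).hasFDerivAt).comp x h1
    simpa [Function.comp_def] using this

end Main

/-- If `g` has `L`-Lipschitz gradient, then for every `θ`,
`‖∇g(θ)‖² ≤ 2‖∇g_β(θ)‖² + β²L²(d+4)²/2`. -/
theorem grad_le_grad_smooth {d : ℕ}
    (g : EuclideanSpace ℝ (Fin d) → ℝ)
    (g' : EuclideanSpace ℝ (Fin d) → EuclideanSpace ℝ (Fin d)) (L β : ℝ)
    (hL : 0 ≤ L) (hβ : 0 < β)
    (hg : ∀ x, HasGradientAt g (g' x) x)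
    (hlip : ∀ x y, ‖g' x - g' y‖ ≤ L * ‖x - y‖)
    (θ : EuclideanSpace ℝ (Fin d)) :
    ‖g' θ‖ ^ 2 ≤ 2 * ‖gradient (gaussSmooth g β) θ‖ ^ 2
      + β ^ 2 * L ^ 2 * ((d : ℝ) + 4) ^ 2 / 2 := by
  have hg'c := g'_cont hL hlip
  have hint : Integrable (fun u : EuclideanSpace ℝ (Fin d) => g' (θ + β • u)) (stdGaussian d) := by
    refine Integrable.mono' (g := fun u => ‖g' θ‖ + (L * β) * ‖u‖)
      ((integrable_const _).add (integrable_norm_stdGaussian.const_mul _))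
      ((hg'c.comp (by fun_prop : Continuous fun u : EuclideanSpace ℝ (Fin d) => θ + β • u)).aestronglyMeasurable)
      (Filter.Eventually.of_forall fun u => ?_)
    have h1 := g'_norm_le hlip θ (θ + β • u)
    have hn : ‖θ + β • u - θ‖ = β * ‖u‖ := by
      rw [add_sub_cancel_left, norm_smul, Real.norm_eq_abs, abs_of_pos hβ]
    rw [hn] at h1
    linarith [h1]
  have hgrad := hasGradient_gaussSmooth hL hβ hg hlip θ
  rw [hgrad.gradient]
  set G := ∫ u, g' (θ + β • u) ∂(stdGaussian d) with hG
  have hb : ‖g' θ - G‖ ≤ L * β * (((d : ℝ) + 1) / 2) := by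
    have heq : g' θ - G = ∫ u, (g' θ - g' (θ + β • u)) ∂(stdGaussian d) := by
      rw [integral_sub (integrable_const _) hint, integral_const, probReal_univ,
        one_smul]
    rw [heq]
    calc ‖∫ u, (g' θ - g' (θ + β • u)) ∂(stdGaussian d)‖
        ≤ ∫ u, (L * β) * ‖u‖ ∂(stdGaussian d) := by
          refine norm_integral_le_of_norm_le (integrable_norm_stdGaussian.const_mul _)
            (Filter.Eventually.of_forall fun u => ?_)
          have := hlip θ (θ + β • u)
          have hn : ‖θ - (θ + β • u)‖ = β * ‖u‖ := by
            rw [show θ - (θ + β • u) = -(β • u) by abel, norm_neg, norm_smul,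
              Real.norm_eq_abs, abs_of_pos hβ]
          rw [hn] at this
          calc ‖g' θ - g' (θ + β • u)‖ ≤ L * (β * ‖u‖) := this
            _ = (L * β) * ‖u‖ := by ring
      _ = (L * β) * ∫ u, ‖u‖ ∂(stdGaussian d) := integral_const_mul _ _
      _ ≤ L * β * (((d : ℝ) + 1) / 2) := by
          refine mul_le_mul_of_nonneg_left integral_norm_stdGaussian_le
            (mul_nonneg hL hβ.le)
  have h1 : ‖g' θ‖ ≤ ‖G‖ + ‖g' θ - G‖ := by
    simpa using norm_add_le G (g' θ - G)
  have hd0 : (0 : ℝ) ≤ d := Nat.cast_nonneg d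
  have hb2 : ‖g' θ - G‖ ^ 2 ≤ (L * β * (((d : ℝ) + 1) / 2)) ^ 2 := by
    exact pow_le_pow_left₀ (norm_nonneg _) hb 2
  have h2 : ‖g' θ‖ ^ 2 ≤ (‖G‖ + ‖g' θ - G‖) ^ 2 := by
    exact pow_le_pow_left₀ (norm_nonneg _) h1 2
  nlinarith [sq_nonneg (‖G‖ - ‖g' θ - G‖), norm_nonneg G, norm_nonneg (g' θ - G),
    sq_nonneg (L * β), mul_nonneg (mul_nonneg (sq_nonneg (L * β)) hd0) hd0]
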